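/- arXiv:2003.10179 — 3 statements merged into one kernel-verified Lean document; each statement's English description precedes it below -/
import Mathlib

section
/- Let x_j < x_σ < x_{j+1} be real numbers. Let Λ, V, s : ℝ → ℝ be continuous on [x_j, x_{j+1}] with Λ > 0 there, let c : ℝ → ℝ be differentiable on [x_j, x_{j+1}], and suppose the flux f := −Λ c' + c V is differentiable on (x_j, x_{j+1}) with f'(x) = s(x) for all x ∈ (x_j, x_{j+1}) and f continuous on [x_j, x_{j+1}]. Define P̂(x) := ∫_{x_σ}^{x} V(t)/Λ(t) dt and ŝ(x) := ∫_{x_σ}^{x} s(t) dt, and set I := ∫_{x_j}^{x_{j+1}} Λ(x)^{−1} e^{−P̂(x)} dx (which is strictly positive). Then the flux at x_σ splits into a homogeneous and an inhomogeneous part: f(x_σ) = −(e^{−P̂(x_{j+1})} c(x_{j+1}) − e^{−P̂(x_j)} c(x_j))/I − (∫_{x_j}^{x_{j+1}} Λ(x)^{−1} e^{−P̂(x)} ŝ(x) dx)/I. -/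
/-- The exact flux at the interface point splits into a homogeneous part and
an inhomogeneous part (complete flux representation in one dimension). -/
theorem complete_flux_splitting
    (xj xσ xj1 : ℝ) (h1 : xj < xσ) (h2 : xσ < xj1)
    (Λ V s c : ℝ → ℝ)
    (hΛc : ContinuousOn Λ (Set.Icc xj xj1))
    (hVc : ContinuousOn V (Set.Icc xj xj1))
    (hsc : ContinuousOn s (Set.Icc xj xj1))
    (hΛpos : ∀ x ∈ Set.Icc xj xj1, 0 < Λ x)
    (hc : ∀ x ∈ Set.Icc xj xj1, DifferentiableAt ℝ c x)
    (f : ℝ → ℝ) (hf : f = fun x => -Λ x * deriv c x + c x * V x)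
    (hfc : ContinuousOn f (Set.Icc xj xj1))
    (hf' : ∀ x ∈ Set.Ioo xj xj1, HasDerivAt f (s x) x)
    (Phat shat : ℝ → ℝ)
    (hPhat : Phat = fun x => ∫ t in xσ..x, V t / Λ t)
    (hshat : shat = fun x => ∫ t in xσ..x, s t)
    (I : ℝ) (hI : I = ∫ x in xj..xj1, (Λ x)⁻¹ * Real.exp (-Phat x)) :
    0 < I ∧
    f xσ = -(Real.exp (-Phat xj1) * c xj1 - Real.exp (-Phat xj) * c xj) / I
      - (∫ x in xj..xj1, (Λ x)⁻¹ * Real.exp (-Phat x) * shat x) / I := by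
  have hle : xj ≤ xj1 := (h1.trans h2).le
  have hK : Set.uIcc xj xj1 = Set.Icc xj xj1 := Set.uIcc_of_le hle
  have hσmem : xσ ∈ Set.Icc xj xj1 := ⟨h1.le, h2.le⟩
  have hσmem' : xσ ∈ Set.uIcc xj xj1 := hK ▸ hσmem
  have hΛne : ∀ x ∈ Set.Icc xj xj1, Λ x ≠ 0 := fun x hx => (hΛpos x hx).ne'
  -- V/Λ continuous on Icc
  have hVΛ : ContinuousOn (fun t => V t / Λ t) (Set.Icc xj xj1) := hVc.div hΛc hΛne
  have hVΛint : IntervalIntegrable (fun t => V t / Λ t) MeasureTheory.volume xj xj1 :=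
    (hVΛ.mono (by rw [hK])).intervalIntegrable
  have hsint : IntervalIntegrable s MeasureTheory.volume xj xj1 :=
    (hsc.mono (by rw [hK])).intervalIntegrable
  -- subinterval integrability
  have hsub : ∀ x ∈ Set.Icc xj xj1, Set.uIcc xσ x ⊆ Set.Icc xj xj1 := by
    intro x hx
    exact Set.uIcc_subset_Icc hσmem hx
  have hVΛintx : ∀ x ∈ Set.Icc xj xj1,
      IntervalIntegrable (fun t => V t / Λ t) MeasureTheory.volume xσ x := fun x hx =>
    (hVΛ.mono (hsub x hx)).intervalIntegrable
  have hsintx : ∀ x ∈ Set.Icc xj xj1,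
      IntervalIntegrable s MeasureTheory.volume xσ x := fun x hx =>
    (hsc.mono (hsub x hx)).intervalIntegrable
  -- continuity of Phat and shat on Icc
  have hPhatc : ContinuousOn Phat (Set.Icc xj xj1) := by
    rw [hPhat, ← hK]
    exact intervalIntegral.continuousOn_primitive_interval' hVΛint hσmem'
  have hshatc : ContinuousOn shat (Set.Icc xj xj1) := by
    rw [hshat, ← hK]
    exact intervalIntegral.continuousOn_primitive_interval' hsint hσmem'
  -- f x = f xσ + shat x on Icc
  have hfs : ∀ x ∈ Set.Icc xj xj1, f x = f xσ + shat x := by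
    intro x hx
    have h1' : shat x = f x - f xσ := by
      rw [hshat]
      refine intervalIntegral.integral_eq_sub_of_hasDeriv_right
        (hfc.mono (hsub x hx)) (fun y hy => ?_) (hsintx x hx)
      have hy' : y ∈ Set.Ioo xj xj1 := by
        constructor
        · exact lt_of_le_of_lt (le_min hσmem.1 hx.1) hy.1
        · exact lt_of_lt_of_le hy.2 (max_le hσmem.2 hx.2)
      exact (hf' y hy').hasDerivWithinAt
    linarith
  -- derivative of Phat on the open interval
  have hPhat' : ∀ x ∈ Set.Ioo xj xj1, HasDerivAt Phat (V x / Λ x) x := by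
    intro x hx
    have hxI : x ∈ Set.Icc xj xj1 := Set.Ioo_subset_Icc_self hx
    have hnhds : Set.Icc xj xj1 ∈ nhds x := Icc_mem_nhds hx.1 hx.2
    have hca : ContinuousAt (fun t => V t / Λ t) x := hVΛ.continuousAt hnhds
    have hmeas : StronglyMeasurableAtFilter (fun t => V t / Λ t) (nhds x)
        MeasureTheory.volume :=
      ⟨Set.Icc xj xj1, hnhds, hVΛ.aestronglyMeasurable measurableSet_Icc⟩
    rw [hPhat]
    exact intervalIntegral.integral_hasDerivAt_right (hVΛintx x hxI) hmeas hca
  -- the auxiliary function g and its derivative φ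
  set g : ℝ → ℝ := fun x => Real.exp (-Phat x) * c x with hg
  set φ : ℝ → ℝ := fun x => -(Λ x)⁻¹ * Real.exp (-Phat x) * (f xσ + shat x) with hφ
  have hgc : ContinuousOn g (Set.Icc xj xj1) :=
    ((hPhatc.neg).rexp).mul (fun x hx => ((hc x hx).continuousAt).continuousWithinAt)
  have hφc : ContinuousOn φ (Set.Icc xj xj1) :=
    ((hΛc.inv₀ hΛne).neg.mul (hPhatc.neg.rexp)).mul (continuousOn_const.add hshatc)
  have hφint : IntervalIntegrable φ MeasureTheory.volume xj xj1 :=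
    (hφc.mono (by rw [hK])).intervalIntegrable
  have hg' : ∀ x ∈ Set.Ioo xj xj1, HasDerivAt g (φ x) x := by
    intro x hx
    have hxI : x ∈ Set.Icc xj xj1 := Set.Ioo_subset_Icc_self hx
    have hP := hPhat' x hx
    have hexp : HasDerivAt (fun y => Real.exp (-Phat y))
        (Real.exp (-Phat x) * -(V x / Λ x)) x := by
      have := (Real.hasDerivAt_exp (-Phat x)).comp x hP.neg
      exact this.congr_deriv (by ring)
    have hc' : HasDerivAt c (deriv c x) x := (hc x hxI).hasDerivAt
    have hprod := hexp.mul hc'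
    have key : Real.exp (-Phat x) * -(V x / Λ x) * c x
        + Real.exp (-Phat x) * deriv c x = φ x := by
      have hfx : f x = f xσ + shat x := hfs x hxI
      have hΛx : Λ x ≠ 0 := hΛne x hxI
      rw [hφ]
      simp only
      rw [← hfx, hf]
      field_simp
      ring
    rw [hg]
    exact hprod.congr_deriv key
  -- FTC for g
  have hFTC : ∫ y in xj..xj1, φ y = g xj1 - g xj :=
    intervalIntegral.integral_eq_sub_of_hasDeriv_right_of_le hle hgc
      (fun x hx => (hg' x hx).hasDerivWithinAt) hφint
  -- split the integral of φ
  have hIint : IntervalIntegrable (fun x => (Λ x)⁻¹ * Real.exp (-Phat x))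
      MeasureTheory.volume xj xj1 :=
    (((hΛc.inv₀ hΛne).mul (hPhatc.neg.rexp)).mono (by rw [hK])).intervalIntegrable
  have hJint : IntervalIntegrable (fun x => (Λ x)⁻¹ * Real.exp (-Phat x) * shat x)
      MeasureTheory.volume xj xj1 :=
    ((((hΛc.inv₀ hΛne).mul (hPhatc.neg.rexp)).mul hshatc).mono (by rw [hK])).intervalIntegrable
  set J : ℝ := ∫ x in xj..xj1, (Λ x)⁻¹ * Real.exp (-Phat x) * shat x with hJ
  have hsplit : ∫ y in xj..xj1, φ y = -(f xσ) * I - J := by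
    have : ∀ y, φ y = -(f xσ) * ((Λ y)⁻¹ * Real.exp (-Phat y))
        - (Λ y)⁻¹ * Real.exp (-Phat y) * shat y := by
      intro y; rw [hφ]; ring
    rw [intervalIntegral.integral_congr (fun y _ => this y)]
    rw [intervalIntegral.integral_sub (hIint.const_mul _) hJint,
      intervalIntegral.integral_const_mul, hI, hJ]
  -- positivity of I
  have hIpos : 0 < I := by
    rw [hI]
    apply intervalIntegral.intervalIntegral_pos_of_pos_on hIint _ (h1.trans h2)
    intro x hx
    have hxI : x ∈ Set.Icc xj xj1 := Set.Ioo_subset_Icc_self hx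
    have h0 := hΛpos x hxI
    positivity
  refine ⟨hIpos, ?_⟩
  have hEq : g xj1 - g xj = -(f xσ) * I - J := by rw [← hFTC, hsplit]
  have hgj1 : g xj1 = Real.exp (-Phat xj1) * c xj1 := rfl
  have hgj : g xj = Real.exp (-Phat xj) * c xj := rfl
  have hfin : f xσ * I
      = -(Real.exp (-Phat xj1) * c xj1 - Real.exp (-Phat xj) * c xj) - J := by
    rw [hgj1, hgj] at hEq; nlinarith [hIpos]
  field_simp
  linarith
end

section
/- Let Λ > 0 and V ≠ 0 be real constants, let x_j < x_σ < x_{j+1}, set Δx := x_{j+1} − x_j, θ := (x_σ − x_j)/Δx ∈ (0,1), P := V·Δx/Λ, and P̂(x) := (V/Λ)(x − x_σ). Let s : ℝ → ℝ be the piecewise constant function equal to s_j on (x_j, x_σ) and to s_{j+1} on (x_σ, x_{j+1}), and set ŝ(x) := ∫_{x_σ}^{x} s(t) dt. Then the inhomogeneous flux has the closed form −(∫_{x_j}^{x_{j+1}} Λ^{−1} e^{−P̂(x)} ŝ(x) dx) / (∫_{x_j}^{x_{j+1}} Λ^{−1} e^{−P̂(x)} dx) = Δx·(Z(−P, θ)·s_j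 − Z(P, 1−θ)·s_{j+1}), where Z(P, α) := (e^{αP} − 1 − αP)/(P(e^{P} − 1)); at the midpoint θ = 1/2 this reduces to the classical complete flux correction Δx·(Z(−P, 1/2)·s_j − Z(P, 1/2)·s_{j+1}). -/
open Real MeasureTheory Set

/-- The function `Z(P, α) = (e^{αP} − 1 − αP)/(P(e^{P} − 1))`. -/
noncomputable def Zfun (P α : ℝ) : ℝ :=
  (Real.exp (α * P) - 1 - α * P) / (P * (Real.exp P - 1))

lemma negk_deriv (k c x : ℝ) : HasDerivAt (fun x => -(k * (x - c))) (-k) x := by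
  have h := (((hasDerivAt_id x).sub_const c).const_mul k).neg
  simp at h
  exact h

lemma expAux_deriv (k c : ℝ) (hk : k ≠ 0) (x : ℝ) :
    HasDerivAt (fun x => -Real.exp (-(k * (x - c))) / k) (Real.exp (-(k * (x - c)))) x := by
  have h3 := ((negk_deriv k c x).exp.neg).div_const k
  refine h3.congr_deriv ?_
  field_simp

lemma linAux_deriv (k c : ℝ) (hk : k ≠ 0) (x : ℝ) :
    HasDerivAt (fun x => -Real.exp (-(k * (x - c))) * ((x - c) / k + 1 / k ^ 2))
      (Real.exp (-(k * (x - c))) * (x - c)) x := by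
  have h2 := (negk_deriv k c x).exp.neg
  have h3 : HasDerivAt (fun x => (x - c) / k + 1 / k ^ 2) (1 / k) x :=
    (((hasDerivAt_id x).sub_const c).div_const k).add_const (1 / k ^ 2)
  have h4 := h2.mul h3
  refine h4.congr_deriv ?_
  simp only [Pi.neg_apply]
  field_simp
  ring

lemma int_exp (k c a b : ℝ) (hk : k ≠ 0) :
    ∫ x in a..b, Real.exp (-(k * (x - c)))
      = (Real.exp (-(k * (a - c))) - Real.exp (-(k * (b - c)))) / k := by
  rw [intervalIntegral.integral_eq_sub_of_hasDerivAt (fun x _ => expAux_deriv k c hk x)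
    (Continuous.intervalIntegrable (by continuity) a b)]
  ring

lemma int_explin (k c a b : ℝ) (hk : k ≠ 0) :
    ∫ x in a..b, Real.exp (-(k * (x - c))) * (x - c)
      = (-Real.exp (-(k * (b - c))) * ((b - c) / k + 1 / k ^ 2))
        - (-Real.exp (-(k * (a - c))) * ((a - c) / k + 1 / k ^ 2)) := by
  rw [intervalIntegral.integral_eq_sub_of_hasDerivAt (fun x _ => linAux_deriv k c hk x)
    (Continuous.intervalIntegrable (by continuity) a b)]

set_option maxHeartbeats 1600000 in
/-- Closed form of the inhomogeneous flux of the complete flux scheme for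
constant coefficients and a piecewise constant source. -/
theorem inhomogeneous_flux_closed_form
    (Λ V xj xσ xj1 : ℝ) (hΛ : 0 < Λ) (hV : V ≠ 0)
    (h1 : xj < xσ) (h2 : xσ < xj1)
    (Δx θ P : ℝ) (hΔx : Δx = xj1 - xj) (hθ : θ = (xσ - xj) / Δx) (hP : P = V * Δx / Λ)
    (Phat : ℝ → ℝ) (hPhat : Phat = fun x => V / Λ * (x - xσ))
    (s : ℝ → ℝ) (sj sj1 : ℝ)
    (hs1 : ∀ x ∈ Set.Ioo xj xσ, s x = sj)
    (hs2 : ∀ x ∈ Set.Ioo xσ xj1, s x = sj1)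
    (shat : ℝ → ℝ) (hshat : shat = fun x => ∫ t in xσ..x, s t) :
    -(∫ x in xj..xj1, Λ⁻¹ * Real.exp (-Phat x) * shat x) /
        (∫ x in xj..xj1, Λ⁻¹ * Real.exp (-Phat x)) =
      Δx * (Zfun (-P) θ * sj - Zfun P (1 - θ) * sj1) ∧
    (θ = 1 / 2 →
      -(∫ x in xj..xj1, Λ⁻¹ * Real.exp (-Phat x) * shat x) /
          (∫ x in xj..xj1, Λ⁻¹ * Real.exp (-Phat x)) =
        Δx * (Zfun (-P) (1 / 2) * sj - Zfun P (1 / 2) * sj1)) := by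
  subst hPhat hshat
  beta_reduce
  have hΛ0 : Λ ≠ 0 := ne_of_gt hΛ
  set k : ℝ := V / Λ with hkdef
  have hk : k ≠ 0 := div_ne_zero hV hΛ0
  have hΔ : xj1 - xj ≠ 0 := sub_ne_zero.mpr (ne_of_gt (h1.trans h2))
  -- values of shat on the two subintervals
  have hL : ∀ x ∈ Icc xj xσ, (∫ t in xσ..x, s t) = sj * (x - xσ) := by
    intro x hx
    have hcongr : (∫ t in xσ..x, s t) = ∫ _ in xσ..x, sj := by
      apply intervalIntegral.integral_congr_ae
      have hne : ∀ᵐ t : ℝ, t ≠ xσ := by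
        refine MeasureTheory.ae_iff.mpr ?_
        simp [Set.setOf_eq_eq_singleton']
      filter_upwards [hne] with t ht hmem
      rw [Set.uIoc_comm, Set.uIoc_of_le hx.2] at hmem
      exact hs1 t ⟨lt_of_le_of_lt hx.1 hmem.1, lt_of_le_of_ne hmem.2 ht⟩
    rw [hcongr, intervalIntegral.integral_const, smul_eq_mul]
    ring
  have hR : ∀ x ∈ Icc xσ xj1, (∫ t in xσ..x, s t) = sj1 * (x - xσ) := by
    intro x hx
    have hcongr : (∫ t in xσ..x, s t) = ∫ _ in xσ..x, sj1 := by
      apply intervalIntegral.integral_congr_ae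
      have hne : ∀ᵐ t : ℝ, t ≠ xj1 := by
        refine MeasureTheory.ae_iff.mpr ?_
        simp [Set.setOf_eq_eq_singleton']
      filter_upwards [hne] with t ht hmem
      rw [Set.uIoc_of_le hx.1] at hmem
      exact hs2 t ⟨hmem.1, lt_of_le_of_ne (le_trans hmem.2 hx.2) ht⟩
    rw [hcongr, intervalIntegral.integral_const, smul_eq_mul]
    ring
  -- denominator
  have hD : (∫ x in xj..xj1, Λ⁻¹ * Real.exp (-(k * (x - xσ))))
      = Λ⁻¹ * ((Real.exp (-(k * (xj - xσ))) - Real.exp (-(k * (xj1 - xσ)))) / k) := by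
    rw [intervalIntegral.integral_const_mul, int_exp k xσ xj xj1 hk]
  -- numerator pieces: integrability
  have hint1 : IntervalIntegrable
      (fun x => Λ⁻¹ * Real.exp (-(k * (x - xσ))) * ∫ t in xσ..x, s t) volume xj xσ := by
    apply (Continuous.intervalIntegrable
      (by continuity : Continuous fun x => Λ⁻¹ * Real.exp (-(k * (x - xσ))) * (sj * (x - xσ)))
      xj xσ).congr
    unfold Set.EqOn
    intro x hx
    rw [Set.uIoc_of_le h1.le] at hx
    simp only
    rw [hL x ⟨hx.1.le, hx.2⟩]
  have hint2 : IntervalIntegrable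
      (fun x => Λ⁻¹ * Real.exp (-(k * (x - xσ))) * ∫ t in xσ..x, s t) volume xσ xj1 := by
    apply (Continuous.intervalIntegrable
      (by continuity : Continuous fun x => Λ⁻¹ * Real.exp (-(k * (x - xσ))) * (sj1 * (x - xσ)))
      xσ xj1).congr
    unfold Set.EqOn
    intro x hx
    rw [Set.uIoc_of_le h2.le] at hx
    simp only
    rw [hR x ⟨hx.1.le, hx.2⟩]
  -- numerator closed form
  have hN1 : (∫ x in xj..xσ, Λ⁻¹ * Real.exp (-(k * (x - xσ))) * ∫ t in xσ..x, s t)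
      = Λ⁻¹ * sj * ((-Real.exp (-(k * (xσ - xσ))) * ((xσ - xσ) / k + 1 / k ^ 2))
          - (-Real.exp (-(k * (xj - xσ))) * ((xj - xσ) / k + 1 / k ^ 2))) := by
    rw [intervalIntegral.integral_congr
      (g := fun x => Λ⁻¹ * sj * (Real.exp (-(k * (x - xσ))) * (x - xσ)))
      (fun x hx => by
        rw [Set.uIcc_of_le h1.le] at hx
        simp only
        rw [hL x hx]; ring)]
    rw [intervalIntegral.integral_const_mul, int_explin k xσ xj xσ hk]
  have hN2 : (∫ x in xσ..xj1, Λ⁻¹ * Real.exp (-(k * (x - xσ))) * ∫ t in xσ..x, s t)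
      = Λ⁻¹ * sj1 * ((-Real.exp (-(k * (xj1 - xσ))) * ((xj1 - xσ) / k + 1 / k ^ 2))
          - (-Real.exp (-(k * (xσ - xσ))) * ((xσ - xσ) / k + 1 / k ^ 2))) := by
    rw [intervalIntegral.integral_congr
      (g := fun x => Λ⁻¹ * sj1 * (Real.exp (-(k * (x - xσ))) * (x - xσ)))
      (fun x hx => by
        rw [Set.uIcc_of_le h2.le] at hx
        simp only
        rw [hR x hx]; ring)]
    rw [intervalIntegral.integral_const_mul, int_explin k xσ xσ xj1 hk]
  have hNum : (∫ x in xj..xj1, Λ⁻¹ * Real.exp (-(k * (x - xσ))) * ∫ t in xσ..x, s t)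
      = (∫ x in xj..xσ, Λ⁻¹ * Real.exp (-(k * (x - xσ))) * ∫ t in xσ..x, s t)
        + ∫ x in xσ..xj1, Λ⁻¹ * Real.exp (-(k * (x - xσ))) * ∫ t in xσ..x, s t :=
    (intervalIntegral.integral_add_adjacent_intervals hint1 hint2).symm
  -- exponential bookkeeping
  set E1 : ℝ := Real.exp (k * (xσ - xj)) with hE1def
  set E2 : ℝ := Real.exp (k * (xj1 - xσ)) with hE2def
  have hPk : P = k * (xj1 - xj) := by rw [hP, hΔx, hkdef]; ring
  have hP0 : P ≠ 0 := by rw [hPk]; exact mul_ne_zero hk hΔ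
  have e1 : Real.exp (-(k * (xj - xσ))) = E1 := by
    rw [hE1def]; congr 1; ring
  have e2 : Real.exp (-(k * (xj1 - xσ))) = E2⁻¹ := by
    rw [hE2def, ← Real.exp_neg]
  have e0 : Real.exp (-(k * (xσ - xσ))) = 1 := by
    norm_num
  have hEP : Real.exp P = E1 * E2 := by
    rw [hPk, hE1def, hE2def, ← Real.exp_add]
    congr 1
    ring
  have hENP : Real.exp (-P) = (E1 * E2)⁻¹ := by
    rw [Real.exp_neg, hEP]
  have hEθ : Real.exp (θ * -P) = E1⁻¹ := by
    rw [show θ * -P = -(k * (xσ - xj)) by rw [hθ, hPk, hΔx]; field_simp,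
      Real.exp_neg, hE1def]
  have hE1θ : Real.exp ((1 - θ) * P) = E2 := by
    rw [show (1 - θ) * P = k * (xj1 - xσ) by rw [hθ, hPk, hΔx]; field_simp; ring, hE2def]
  have hE1ne : E1 ≠ 0 := Real.exp_ne_zero _
  have hE2ne : E2 ≠ 0 := Real.exp_ne_zero _
  have hE12 : E1 * E2 ≠ 1 := by
    rw [← hEP]
    exact fun h => hP0 (Real.exp_eq_exp.mp (by rw [Real.exp_zero]; exact h))
  have hE12' : E1 * E2 - 1 ≠ 0 := sub_ne_zero.mpr hE12
  have h1E12 : 1 - E1 * E2 ≠ 0 := sub_ne_zero.mpr (Ne.symm hE12)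
  have hinv : (E1 * E2)⁻¹ - 1 ≠ 0 := by
    rw [sub_ne_zero]
    exact fun h => hE12 (by rw [← inv_inv (E1 * E2), h, inv_one])
  have hsub : E1 - E2⁻¹ ≠ 0 := by
    rw [sub_ne_zero]
    intro h
    apply hE12
    rw [h]
    field_simp
  -- the key computation
  have key : -(∫ x in xj..xj1, Λ⁻¹ * Real.exp (-(k * (x - xσ))) * ∫ t in xσ..x, s t) /
        (∫ x in xj..xj1, Λ⁻¹ * Real.exp (-(k * (x - xσ))))
      = Δx * (Zfun (-P) θ * sj - Zfun P (1 - θ) * sj1) := by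
    rw [hNum, hN1, hN2, hD, e0, e1, e2]
    simp only [Zfun, hEθ, hE1θ, hENP, hEP]
    rw [hθ, hPk, hΔx]
    field_simp
    ring
  exact ⟨key, fun hθ2 => by rw [key, hθ2]; norm_num⟩
end

section
/- Let Λ > 0 and V ≠ 0 be real constants, let x_j < x_σ < x_{j+1}, set Δx := x_{j+1} − x_j, θ := (x_σ − x_j)/Δx ∈ (0,1), and P := V·Δx/Λ. Let s_j, s_{j+1} ∈ ℝ, and let c : ℝ → ℝ be differentiable on [x_j, x_{j+1}] such that the flux f := −Λ c' + c V is continuous on [x_j, x_{j+1}] and differentiable on (x_j, x_σ) and (x_σ, x_{j+1}) with f'(x) = s_j for x ∈ (x_j, x_σ) and f'(x) = s_{j+1} for x ∈ (x_σ, x_{j+1}). Then the exact flux at x_σ equals the Scharfetter–Gummel homogeneous flux plus the inhomogeneous correction: f(x_σ) = (Λ/Δx)·(B(−P)·c(x_j) − B(P)·c(x_{j+1})) + Δx·(Z(−P, θ)·s_j − Z(P, 1−θ)·s_{j+1}), where B(t) := t/(e^{t} − 1) and Z(P, α) := (e^{αP} − 1 − αP)/(P(e^{P} − 1)). -/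
noncomputable def Bern (t : ℝ) : ℝ := t / (Real.exp t - 1)

set_option maxHeartbeats 2000000 in
/-- For constant coefficients and a piecewise constant source, the exact flux at
the interface point equals the Scharfetter–Gummel homogeneous flux plus the
inhomogeneous correction. -/
theorem complete_flux_representation
    (Λ V xj xσ xj1 : ℝ) (hΛ : 0 < Λ) (hV : V ≠ 0)
    (h1 : xj < xσ) (h2 : xσ < xj1)
    (Δx θ P : ℝ) (hΔx : Δx = xj1 - xj) (hθ : θ = (xσ - xj) / Δx) (hP : P = V * Δx / Λ)
    (sj sj1 : ℝ) (c : ℝ → ℝ)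
    (hc : ∀ x ∈ Set.Icc xj xj1, DifferentiableAt ℝ c x)
    (f : ℝ → ℝ) (hf : f = fun x => -Λ * deriv c x + c x * V)
    (hfc : ContinuousOn f (Set.Icc xj xj1))
    (hf1 : ∀ x ∈ Set.Ioo xj xσ, HasDerivAt f sj x)
    (hf2 : ∀ x ∈ Set.Ioo xσ xj1, HasDerivAt f sj1 x) :
    f xσ = Λ / Δx * (Bern (-P) * c xj - Bern P * c xj1)
      + Δx * (Zfun (-P) θ * sj - Zfun P (1 - θ) * sj1) := by
  have hΔ : 0 < Δx := by rw [hΔx]; linarith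
  have hΔ0 : Δx ≠ 0 := ne_of_gt hΔ
  have hΛ0 : Λ ≠ 0 := ne_of_gt hΛ
  have hθΔ : θ * Δx = xσ - xj := by rw [hθ]; field_simp
  have h1θΔ : (1 - θ) * Δx = xj1 - xσ := by
    have : θ * Δx = xσ - xj := hθΔ
    rw [hΔx] at this ⊢; linarith [this]
  have hP0 : P ≠ 0 := by
    rw [hP]; exact div_ne_zero (mul_ne_zero hV hΔ0) hΛ0
  set k : ℝ := V / Λ with hk
  have hPk : P = k * Δx := by rw [hP, hk]; ring
  -- value of f on the two subintervals
  have hval : ∀ x ∈ Set.Icc xj xj1, f x = -Λ * deriv c x + c x * V := by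
    intro x _; rw [hf]
  have hA : ∀ x ∈ Set.Icc xj xσ, f x = f xσ + sj * (x - xσ) := by
    intro x hx
    rcases eq_or_lt_of_le hx.2 with rfl | hlt
    · ring
    · obtain ⟨y, _, hsl⟩ := exists_hasDerivAt_eq_slope f (fun _ => sj) hlt
        (hfc.mono (Set.Icc_subset_Icc hx.1 h2.le))
        (fun y hy => hf1 y ⟨lt_of_le_of_lt hx.1 hy.1, hy.2⟩)
      have h0 : xσ - x ≠ 0 := by linarith
      field_simp at hsl
      linarith [hsl]
  have hB : ∀ x ∈ Set.Icc xσ xj1, f x = f xσ + sj1 * (x - xσ) := by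
    intro x hx
    rcases eq_or_lt_of_le hx.1 with rfl | hlt
    · ring
    · obtain ⟨y, _, hsl⟩ := exists_hasDerivAt_eq_slope f (fun _ => sj1) hlt
        (hfc.mono (Set.Icc_subset_Icc h1.le hx.2))
        (fun y hy => hf2 y ⟨hy.1, lt_of_lt_of_le hy.2 hx.2⟩)
      have h0 : x - xσ ≠ 0 := by linarith
      field_simp at hsl
      linarith [hsl]
  set fσ := f xσ with hfσdef
  set E : ℝ → ℝ := fun x => Real.exp (-k * x) with hE
  have hEd : ∀ x : ℝ, HasDerivAt E (-k * E x) x := by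
    intro x
    have h := ((hasDerivAt_id x).const_mul (-k)).exp
    simp only [id_eq, mul_one] at h
    convert h using 1
    rw [hE]; ring
  have hEc : Continuous E := Real.continuous_exp.comp (continuous_const.mul continuous_id)
  have hccont : ContinuousOn c (Set.Icc xj xj1) :=
    fun x hx => (hc x hx).continuousAt.continuousWithinAt
  set A : ℝ → ℝ → ℝ := fun s x => ((fσ + s * (x - xσ)) / V + s * Λ / (V * V)) * E x with hAdef
  have hAd : ∀ (s x : ℝ), HasDerivAt (fun y => A s y)
      (s * 1 / V * E x + ((fσ + s * (x - xσ)) / V + s * Λ / (V * V)) * (-k * E x)) x := by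
    intro s x
    have h := ((((((hasDerivAt_id x).sub_const xσ).const_mul s).const_add fσ).div_const V).add_const
      (s * Λ / (V * V))).mul (hEd x)
    exact h
  have hAc : ∀ s : ℝ, Continuous (fun y => A s y) := fun s => by
    have := fun x => (hAd s x).continuousAt
    exact continuous_iff_continuousAt.2 this
  -- MVT on first subinterval
  have hE1 : c xσ * E xσ - A sj xσ = c xj * E xj - A sj xj := by
    obtain ⟨y, hy, hsl⟩ := exists_hasDerivAt_eq_slope (fun x => c x * E x - A sj x)
      (fun _ => 0) h1
      (((hccont.mono (Set.Icc_subset_Icc le_rfl h2.le)).mul hEc.continuousOn).sub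
        ((hAc sj).continuousOn))
      (by
        intro x hx
        have hxm : x ∈ Set.Icc xj xj1 := ⟨hx.1.le, hx.2.le.trans h2.le⟩
        have hcd := (hc x hxm).hasDerivAt
        have hH := (hcd.mul (hEd x)).sub (hAd sj x)
        have hfxv : f x = -Λ * deriv c x + c x * V := by rw [hf]
        have hfA : fσ + sj * (x - xσ) = -Λ * deriv c x + c x * V := by
          rw [← hfxv]; rw [hA x ⟨hx.1.le, hx.2.le⟩]
        have hz : deriv c x * E x + c x * (-k * E x) -
            (sj * 1 / V * E x +
              ((fσ + sj * (x - xσ)) / V + sj * Λ / (V * V)) * (-k * E x)) = 0 := by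
          rw [hk]
          field_simp
          linear_combination (E x * V) * hfA
        exact hH.congr_deriv hz)
    have h0 : xσ - xj ≠ 0 := by linarith
    field_simp at hsl
    linarith [hsl]
  -- MVT on second subinterval
  have hE2 : c xj1 * E xj1 - A sj1 xj1 = c xσ * E xσ - A sj1 xσ := by
    obtain ⟨y, hy, hsl⟩ := exists_hasDerivAt_eq_slope (fun x => c x * E x - A sj1 x)
      (fun _ => 0) h2
      (((hccont.mono (Set.Icc_subset_Icc h1.le le_rfl)).mul hEc.continuousOn).sub
        ((hAc sj1).continuousOn))
      (by
        intro x hx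
        have hxm : x ∈ Set.Icc xj xj1 := ⟨h1.le.trans hx.1.le, hx.2.le⟩
        have hcd := (hc x hxm).hasDerivAt
        have hH := (hcd.mul (hEd x)).sub (hAd sj1 x)
        have hfxv : f x = -Λ * deriv c x + c x * V := by rw [hf]
        have hfA : fσ + sj1 * (x - xσ) = -Λ * deriv c x + c x * V := by
          rw [← hfxv]; rw [hB x ⟨hx.1.le, hx.2.le⟩]
        have hz : deriv c x * E x + c x * (-k * E x) -
            (sj1 * 1 / V * E x +
              ((fσ + sj1 * (x - xσ)) / V + sj1 * Λ / (V * V)) * (-k * E x)) = 0 := by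
          rw [hk]
          field_simp
          linear_combination (E x * V) * hfA
        exact hH.congr_deriv hz)
    have h0 : xj1 - xσ ≠ 0 := by linarith
    field_simp at hsl
    linarith [hsl]
  -- exponential relations
  set a := Real.exp (θ * P) with hadef
  set b := Real.exp ((1 - θ) * P) with hbdef
  have ha0 : a ≠ 0 := (Real.exp_pos _).ne'
  have hb0 : b ≠ 0 := (Real.exp_pos _).ne'
  have hab : a * b = Real.exp P := by
    rw [hadef, hbdef, ← Real.exp_add]; congr 1; ring
  have habne : a * b ≠ 1 := by
    rw [hab]
    intro h
    exact hP0 ((Real.exp_eq_one_iff P).1 h)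
  have hinv : Real.exp (-P) = (a * b)⁻¹ := by rw [hab, ← Real.exp_neg]
  have hainv : Real.exp (θ * -P) = a⁻¹ := by
    rw [hadef, ← Real.exp_neg]; congr 1; ring
  have hq0 : E xσ ≠ 0 := by simp only [hE]; exact (Real.exp_pos _).ne'
  have hw0 : E xj1 ≠ 0 := by simp only [hE]; exact (Real.exp_pos _).ne'
  have hExja : E xj = a * E xσ := by
    simp only [hE, hadef, ← Real.exp_add]
    congr 1
    rw [hPk]
    linear_combination (-k) * hθΔ
  have hExj1b : E xj1 * b = E xσ := by
    simp only [hE, hbdef, ← Real.exp_add]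
    congr 1
    rw [hPk]
    linear_combination k * h1θΔ
  have hΛP : Λ * P = V * Δx := by rw [hP]; field_simp
  have hxjd : xj - xσ = -(θ * Δx) := by linarith [hθΔ]
  have hxj1d : xj1 - xσ = (1 - θ) * Δx := by linarith [h1θΔ]
  simp only [hAdef] at hE1 hE2
  rw [hxjd] at hE1
  rw [hxj1d] at hE2
  rw [hExja] at hE1
  rw [← hExj1b] at hE1 hE2
  simp only [sub_self, mul_zero, add_zero] at hE1 hE2
  have hab1 : a * b - 1 ≠ 0 := sub_ne_zero.2 habne
  have h1ab : (1 : ℝ) - a * b ≠ 0 := sub_ne_zero.2 (Ne.symm habne)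
  simp only [Bern, Zfun]
  rw [hainv, hinv, ← hab, ← hbdef]
  field_simp at hE1 hE2 ⊢
  have key : fσ * (V * (a * b - 1)) * (E xj1 * V) =
      (V * V * (a * b * c xj - c xj1) + sj * Λ * b * (1 - a) + sj * θ * Δx * V * (a * b)
        + sj1 * Λ * (1 - b) + sj1 * (1 - θ) * Δx * V) * (E xj1 * V) := by
    linear_combination (E xj1 * V) * (b * hE1 + hE2)
  have key2 := mul_right_cancel₀ (mul_ne_zero hw0 hV) key
  have key4 : fσ * (P * Δx * (a * b - 1)) * (Λ * Λ) =
      (Λ * P * P * (a * b * c xj - c xj1) + sj * b * (1 - a) * Δx ^ 2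
        + sj * θ * (a * b) * Δx ^ 2 * P + sj1 * (1 - b) * Δx ^ 2
        + sj1 * (1 - θ) * Δx ^ 2 * P) * (Λ * Λ) := by
    linear_combination (Λ * Δx ^ 2) * key2 +
      (Λ * Δx * fσ * (a * b - 1) - Λ * (Λ * P + V * Δx) * (a * b * c xj - c xj1)
        - Λ * Δx ^ 2 * sj * θ * (a * b) - Λ * Δx ^ 2 * sj1 * (1 - θ)) * hΛP
  have key4c := mul_right_cancel₀ (mul_ne_zero hΛ0 hΛ0) key4
  have h3 : 1 - b*a ≠ 0 := by rw [mul_comm]; exact h1ab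
  have h4 : b*a - 1 ≠ 0 := by rw [mul_comm]; exact hab1
  field_simp
  linear_combination (1 - b*a) * key4c
end
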